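/- Every echelon-independent connected finite poset is bounded, i.e., has a minimum element and a maximum element. -/

import Mathlib

open scoped Classical
open Finset

noncomputable section

/-- A linear extension of a finite poset, viewed as an order-preserving
bijection onto `Fin n`. -/
def IsLinExt {α : Type*} [PartialOrder α] {n : ℕ} (σ : α ≃ Fin n) : Prop :=
  ∀ a b : α, a ≤ b → σ a ≤ σ b

/-- The Cartan matrix of a finite poset with respect to a linear extension. -/
def cartan {α : Type*} [PartialOrder α] {n : ℕ} (σ : α ≃ Fin n) :
    Matrix (Fin n) (Fin n) ℂ :=
  fun i j => if σ.symm j ≤ σ.symm i then 1 else 0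

/-- Upper-triangular matrices. -/
def IsUpperTri {n : ℕ} (U : Matrix (Fin n) (Fin n) ℂ) : Prop :=
  ∀ i j : Fin n, j < i → U i j = 0

/-- The permutation matrix of `π`, with a `1` in row `i` and column `π i`. -/
def permMat {n : ℕ} (π : Equiv.Perm (Fin n)) : Matrix (Fin n) (Fin n) ℂ :=
  fun i j => if π i = j then 1 else 0

/-- `π` is the (unique) permutation indexing the Bruhat cell of `W`,
i.e. `W ∈ B (permMat π) B` with `B` the invertible upper-triangular matrices. -/
def IsBruhatPerm {n : ℕ} (W : Matrix (Fin n) (Fin n) ℂ) (π : Equiv.Perm (Fin n)) : Prop :=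
  ∃ U₁ U₂ : Matrix (Fin n) (Fin n) ℂ,
    IsUpperTri U₁ ∧ IsUpperTri U₂ ∧ IsUnit U₁.det ∧ IsUnit U₂.det ∧
      W = U₁ * permMat π * U₂

/-- Echelonmotion with respect to `σ`, given the Bruhat permutation `π` of the
Cartan matrix: `ech σ π x = y` iff `permMat π` has a `1` in row `σ y`, column `σ x`. -/
def ech {α : Type*} [PartialOrder α] {n : ℕ} (σ : α ≃ Fin n) (π : Equiv.Perm (Fin n)) :
    α → α := fun x => σ.symm (π⁻¹ (σ x))

end

/-- A finite poset is connected if any two elements are joined by a path in the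
Hasse diagram (a zigzag of covering relations). -/
def PosetConnected (α : Type*) [PartialOrder α] : Prop :=
  ∀ a b : α, Relation.ReflTransGen (fun x y : α => x ⋖ y ∨ y ⋖ x) a b

/-- A finite poset is echelon-independent if echelonmotion is the same map for
all linear extensions. -/
def EchIndep (α : Type*) [PartialOrder α] [Fintype α] : Prop :=
  ∀ (σ σ' : α ≃ Fin (Fintype.card α)) (π π' : Equiv.Perm (Fin (Fintype.card α))),
    IsLinExt σ → IsLinExt σ' →
      IsBruhatPerm (cartan σ) π → IsBruhatPerm (cartan σ') π' →
        ech σ π = ech σ' π'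

noncomputable section
namespace Stmt12Aux
open Matrix

variable {n : ℕ}

lemma isUpperTri_iff {U : Matrix (Fin n) (Fin n) ℂ} :
    IsUpperTri U ↔ U.BlockTriangular id := by
  constructor
  · intro h i j hij; exact h i j hij
  · intro h i j hij; exact h hij

lemma _root_.IsUpperTri.mul {U V : Matrix (Fin n) (Fin n) ℂ} (hU : IsUpperTri U) (hV : IsUpperTri V) :
    IsUpperTri (U * V) :=
  isUpperTri_iff.2 ((isUpperTri_iff.1 hU).mul (isUpperTri_iff.1 hV))

lemma _root_.IsUpperTri.det_eq {U : Matrix (Fin n) (Fin n) ℂ} (hU : IsUpperTri U) :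
    U.det = ∏ i, U i i := det_of_upperTriangular (isUpperTri_iff.1 hU)

lemma _root_.IsUpperTri.inv {U : Matrix (Fin n) (Fin n) ℂ} (hU : IsUpperTri U) (h : IsUnit U.det) :
    IsUpperTri U⁻¹ := by
  letI := U.invertibleOfIsUnitDet h
  exact isUpperTri_iff.2 (blockTriangular_inv_of_blockTriangular (isUpperTri_iff.1 hU))

lemma isUpperTri_one : IsUpperTri (1 : Matrix (Fin n) (Fin n) ℂ) := by
  intro i j hij
  exact Matrix.one_apply_ne (ne_of_gt hij)

lemma _root_.IsUpperTri.diag_ne_zero {U : Matrix (Fin n) (Fin n) ℂ} (hU : IsUpperTri U)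
    (h : IsUnit U.det) (i : Fin n) : U i i ≠ 0 := by
  rw [hU.det_eq] at h
  have := isUnit_of_dvd_unit (Finset.dvd_prod_of_mem (fun i => U i i) (Finset.mem_univ i)) h
  simpa [isUnit_iff_ne_zero] using this

lemma key1 {α : Type*} [PartialOrder α] [NeZero n] (σ : α ≃ Fin n)
    {π : Equiv.Perm (Fin n)} (h : IsBruhatPerm (cartan σ) π) :
    σ.symm 0 ≤ σ.symm (π⁻¹ 0) ∧ ∀ x : α, σ.symm 0 ≤ x → σ x ≤ π⁻¹ 0 := by
  obtain ⟨U₁, U₂, hU₁, hU₂, hd₁, hd₂, hW⟩ := h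
  have hcol : ∀ i, cartan σ i 0 = U₁ i (π⁻¹ 0) * U₂ 0 0 := by
    intro i
    have h1 : (U₁ * permMat π) i 0 = U₁ i (π⁻¹ 0) := by
      rw [Matrix.mul_apply, Finset.sum_eq_single (π⁻¹ 0)]
      · simp [permMat]
      · intro j _ hj
        have : π j ≠ 0 := fun hc => hj (by simp [← hc])
        simp [permMat, this]
      · simp
    calc cartan σ i 0 = ∑ k, (U₁ * permMat π) i k * U₂ k 0 := by
          rw [hW, Matrix.mul_apply]
      _ = U₁ i (π⁻¹ 0) * U₂ 0 0 := by
          rw [Finset.sum_eq_single (0 : Fin n)]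
          · rw [h1]
          · intro k _ hk
            rw [hU₂ k 0 ((Fin.pos_iff_ne_zero' k).mpr hk), mul_zero]
          · simp
  have h00 : U₂ 0 0 ≠ 0 := hU₂.diag_ne_zero hd₂ 0
  constructor
  · have hne : cartan σ (π⁻¹ 0) 0 ≠ 0 := by
      rw [hcol]
      exact mul_ne_zero (hU₁.diag_ne_zero hd₁ _) h00
    by_contra hc
    apply hne
    simp [cartan]; exact hc
  · intro x hx
    by_contra hc
    have hlt : π⁻¹ 0 < σ x := lt_of_not_ge hc
    have : cartan σ (σ x) 0 = 0 := by
      rw [hcol, hU₁ (σ x) (π⁻¹ 0) hlt, zero_mul]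
    rw [cartan] at this
    simp only [Equiv.symm_apply_apply] at this
    rw [if_pos hx] at this
    exact one_ne_zero this


theorem bruhat_exists : ∀ {n : ℕ} (W : Matrix (Fin n) (Fin n) ℂ), IsUnit W.det →
    ∃ π : Equiv.Perm (Fin n), IsBruhatPerm W π := by
  intro n
  induction n with
  | zero =>
    intro W _
    refine ⟨1, 1, 1, isUpperTri_one, isUpperTri_one, by simp, by simp, ?_⟩
    ext i j; exact i.elim0
  | succ n IH =>
    intro W hW
    classical
    -- the pivot in column 0 : bottom-most nonzero entry
    have hc0 : ∃ i, W i 0 ≠ 0 := by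
      by_contra hc
      push_neg at hc
      rw [Matrix.det_eq_zero_of_column_eq_zero 0 hc] at hW
      simpa using hW
    set S : Finset (Fin (n+1)) := Finset.univ.filter (fun i => W i 0 ≠ 0) with hS
    have hSne : S.Nonempty := by
      obtain ⟨i, hi⟩ := hc0; exact ⟨i, by simp [hS, hi]⟩
    set i₀ := S.max' hSne with hi₀def
    have hi₀ : W i₀ 0 ≠ 0 := by
      have := S.max'_mem hSne; simp only [hS, Finset.mem_filter] at this; exact this.2
    have hbelow : ∀ i, i₀ < i → W i 0 = 0 := by
      intro i hi
      by_contra hne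
      have hmem : i ∈ S := by simp [hS, hne]
      exact absurd (S.le_max' i hmem) (not_le.mpr hi)
    set c := W i₀ 0 with hcdef
    have hc : c ≠ 0 := hi₀
    -- row-clearing matrix
    set N₁ : Matrix (Fin (n+1)) (Fin (n+1)) ℂ :=
      Matrix.of (fun i j => if j = i₀ ∧ i ≠ i₀ then -(W i 0 / c) else 0) with hN₁
    set E₁ : Matrix (Fin (n+1)) (Fin (n+1)) ℂ := 1 + N₁ with hE₁
    have hE₁tri : IsUpperTri E₁ := by
      intro i j hij
      rw [hE₁, Matrix.add_apply, Matrix.one_apply_ne (ne_of_gt hij), hN₁, Matrix.of_apply]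
      by_cases h : j = i₀ ∧ i ≠ i₀
      · rw [if_pos h, hbelow i (h.1 ▸ hij)]; simp
      · rw [if_neg h]; simp
    have hE₁diag : ∀ i, E₁ i i = 1 := by
      intro i
      rw [hE₁, Matrix.add_apply, Matrix.one_apply_eq, hN₁, Matrix.of_apply]
      by_cases h : i = i₀ <;> simp [h]
    have hE₁det : IsUnit E₁.det := by
      rw [hE₁tri.det_eq]
      simp [hE₁diag]
    set A := E₁ * W with hA
    have hA0 : ∀ i, A i 0 = if i = i₀ then c else 0 := by
      intro i
      have hNW : A i 0 = W i 0 + (N₁ * W) i 0 := by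
        rw [hA, hE₁, add_mul, one_mul, Matrix.add_apply]
      rw [hNW, Matrix.mul_apply, Finset.sum_eq_single i₀]
      · by_cases h : i = i₀
        · subst h
          simp [hN₁, hcdef]
        · rw [if_neg h, hN₁, Matrix.of_apply, if_pos ⟨rfl, h⟩, ← hcdef,
            neg_mul, div_mul_cancel₀ _ hc, add_neg_cancel]
      · intro j _ hj
        rw [hN₁, Matrix.of_apply, if_neg (by tauto), zero_mul]
      · simp
    -- column-clearing matrix
    set N₂ : Matrix (Fin (n+1)) (Fin (n+1)) ℂ :=
      Matrix.of (fun k j => if k = 0 ∧ j ≠ 0 then -(A i₀ j / c) else 0) with hN₂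
    set E₂ : Matrix (Fin (n+1)) (Fin (n+1)) ℂ := 1 + N₂ with hE₂
    have hE₂tri : IsUpperTri E₂ := by
      intro k j hjk
      have hk : k ≠ 0 := ne_of_gt (lt_of_le_of_lt (Fin.zero_le j) hjk)
      rw [hE₂, Matrix.add_apply, Matrix.one_apply_ne (ne_of_gt hjk), hN₂, Matrix.of_apply,
        if_neg (by tauto)]
      simp
    have hE₂diag : ∀ k, E₂ k k = 1 := by
      intro k
      rw [hE₂, Matrix.add_apply, Matrix.one_apply_eq, hN₂, Matrix.of_apply,
        if_neg (by tauto)]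
      simp
    have hE₂det : IsUnit E₂.det := by
      rw [hE₂tri.det_eq]
      simp [hE₂diag]
    set B := A * E₂ with hB
    have hE₂col0 : ∀ k, E₂ k 0 = if k = 0 then 1 else 0 := by
      intro k
      rw [hE₂, Matrix.add_apply, hN₂, Matrix.of_apply, if_neg (by tauto), add_zero,
        Matrix.one_apply]
    have hBcol : ∀ i, B i 0 = if i = i₀ then c else 0 := by
      intro i
      rw [hB, Matrix.mul_apply, Finset.sum_eq_single (0 : Fin (n+1))]
      · rw [hE₂col0, if_pos rfl, mul_one, hA0]
      · intro k _ hk; rw [hE₂col0, if_neg hk, mul_zero]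
      · simp
    have hBrow : ∀ j, j ≠ 0 → B i₀ j = 0 := by
      intro j hj
      have h1 : B i₀ j = A i₀ j + (A * N₂) i₀ j := by
        rw [hB, hE₂, mul_add, mul_one, Matrix.add_apply]
      rw [h1, Matrix.mul_apply, Finset.sum_eq_single (0 : Fin (n+1))]
      · rw [hN₂, Matrix.of_apply, if_pos ⟨rfl, hj⟩,
          show A i₀ 0 = c from by rw [hA0]; simp,
          show c * -(A i₀ j / c) = -(A i₀ j) from by field_simp, add_neg_cancel]
      · intro k _ hk
        rw [hN₂, Matrix.of_apply, if_neg (by tauto), mul_zero]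
      · simp
    have hBW : B = E₁ * W * E₂ := by rw [hB, hA]
    have hdetB : IsUnit B.det := by
      rw [hBW, Matrix.det_mul, Matrix.det_mul]
      exact (hE₁det.mul hW).mul hE₂det
    -- the complementary minor
    set C : Matrix (Fin n) (Fin n) ℂ := B.submatrix i₀.succAbove Fin.succ with hCdef
    have hdetB' : B.det = (-1) ^ (i₀ : ℕ) * c * C.det := by
      rw [Matrix.det_succ_column_zero, Finset.sum_eq_single i₀]
      · rw [hBcol, if_pos rfl, hCdef]
      · intro i _ hi; rw [hBcol, if_neg hi, mul_zero, zero_mul]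
      · simp
    have hdetC : IsUnit C.det := by
      rw [hdetB'] at hdetB
      rw [isUnit_iff_ne_zero] at hdetB ⊢
      intro h; exact hdetB (by rw [h, mul_zero])
    obtain ⟨ρ, V₁, V₂, hV₁, hV₂, hVd₁, hVd₂, hC⟩ := IH C hdetC
    -- reindexing equivalences
    set er : Fin (n+1) ≃ (Fin n ⊕ Unit) :=
      (finSuccEquiv' i₀).trans (Equiv.optionEquivSumPUnit _) with her
    set ec : Fin (n+1) ≃ (Fin n ⊕ Unit) :=
      (finSuccEquiv' 0).trans (Equiv.optionEquivSumPUnit _) with hec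
    have her₀ : er i₀ = Sum.inr PUnit.unit := by
      rw [her]; simp [finSuccEquiv'_at]
    have hers : ∀ a, er (i₀.succAbove a) = Sum.inl a := by
      intro a; rw [her]; simp [finSuccEquiv'_succAbove]
    have hec₀ : ec 0 = Sum.inr PUnit.unit := by
      rw [hec]; simp [finSuccEquiv'_at]
    have hecs : ∀ b, ec (Fin.succ b) = Sum.inl b := by
      intro b; rw [hec]
      simp [finSuccEquiv'_above (Fin.zero_le (Fin.castSucc b))]
    have hecsymm₀ : ec.symm (Sum.inr PUnit.unit) = 0 := by
      rw [← hec₀, Equiv.symm_apply_apply]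
    have hecsymms : ∀ b, ec.symm (Sum.inl b) = Fin.succ b := by
      intro b; rw [← hecs b, Equiv.symm_apply_apply]
    -- blocks
    set cc : Matrix Unit Unit ℂ := Matrix.of (fun _ _ => c) with hcc
    set P1 : Matrix (Fin n ⊕ Unit) (Fin n ⊕ Unit) ℂ := Matrix.fromBlocks V₁ 0 0 1 with hP1
    set P2 : Matrix (Fin n ⊕ Unit) (Fin n ⊕ Unit) ℂ :=
      Matrix.fromBlocks (permMat ρ) 0 0 cc with hP2
    set P3 : Matrix (Fin n ⊕ Unit) (Fin n ⊕ Unit) ℂ := Matrix.fromBlocks V₂ 0 0 1 with hP3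
    have hblocks : Matrix.fromBlocks C 0 0 cc = P1 * P2 * P3 := by
      rw [hP1, hP2, hP3, Matrix.fromBlocks_multiply, Matrix.fromBlocks_multiply]
      simp [hC, Matrix.mul_assoc]
    have hBeq : B = (Matrix.fromBlocks C 0 0 cc).submatrix er ec := by
      ext i j
      rw [Matrix.submatrix_apply]
      rcases eq_or_ne i i₀ with rfl | hi
      · rcases eq_or_ne j 0 with rfl | hj
        · rw [her₀, hec₀, Matrix.fromBlocks_apply₂₂, hBcol, if_pos rfl, hcc]; rfl
        · obtain ⟨b, hb⟩ := Fin.exists_succAbove_eq hj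
          rw [Fin.succAbove_zero] at hb
          subst hb
          rw [her₀, hecs, Matrix.fromBlocks_apply₂₁, hBrow _ (Fin.succ_ne_zero b)]; rfl
      · obtain ⟨a, ha⟩ := Fin.exists_succAbove_eq hi
        subst ha
        rcases eq_or_ne j 0 with rfl | hj
        · rw [hers, hec₀, Matrix.fromBlocks_apply₁₂, hBcol, if_neg (Fin.succAbove_ne i₀ a)]; rfl
        · obtain ⟨b, hb⟩ := Fin.exists_succAbove_eq hj
          rw [Fin.succAbove_zero] at hb
          subst hb
          rw [hers, hecs, Matrix.fromBlocks_apply₁₁, hCdef, Matrix.submatrix_apply]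
    have hB2 : B = (P1.submatrix er er) * (P2.submatrix er ec) * (P3.submatrix ec ec) := by
      rw [Matrix.submatrix_mul_equiv P1 P2 er er ec,
        Matrix.submatrix_mul_equiv (P1 * P2) P3 er ec ec, ← hblocks]
      exact hBeq
    -- the permutation and the diagonal correction
    set π : Equiv.Perm (Fin (n+1)) :=
      (er.trans (Equiv.sumCongr ρ (Equiv.refl Unit))).trans ec.symm with hπ
    have hπ₀ : π i₀ = 0 := by
      rw [hπ]; simp [her₀, hecsymm₀]
    have hπs : ∀ a, π (i₀.succAbove a) = Fin.succ (ρ a) := by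
      intro a; rw [hπ]; simp [hers, hecsymms]
    set D : Matrix (Fin (n+1)) (Fin (n+1)) ℂ :=
      Matrix.diagonal (fun i => if i = i₀ then c else 1) with hD
    have hDtri : IsUpperTri D := by
      intro i j hij
      rw [hD]; exact Matrix.diagonal_apply_ne _ (ne_of_gt hij)
    have hDdet : IsUnit D.det := by
      rw [hD, Matrix.det_diagonal, Finset.prod_ite_eq' Finset.univ i₀ (fun _ => c)]
      simpa [isUnit_iff_ne_zero] using hc
    have hMM : P2.submatrix er ec = D * permMat π := by
      ext i j
      rw [Matrix.submatrix_apply, hD, Matrix.diagonal_mul]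
      rcases eq_or_ne i i₀ with rfl | hi
      · rw [her₀, if_pos rfl]
        rcases eq_or_ne j 0 with rfl | hj
        · rw [hec₀, hP2, Matrix.fromBlocks_apply₂₂, hcc]
          simp [permMat, hπ₀]
        · obtain ⟨b, hb⟩ := Fin.exists_succAbove_eq hj
          rw [Fin.succAbove_zero] at hb
          subst hb
          rw [hecs, hP2, Matrix.fromBlocks_apply₂₁]
          simp [permMat, hπ₀, (Fin.succ_ne_zero b).symm]
      · obtain ⟨a, ha⟩ := Fin.exists_succAbove_eq hi
        subst ha
        rw [hers, if_neg (Fin.succAbove_ne i₀ a)]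
        rcases eq_or_ne j 0 with rfl | hj
        · rw [hec₀, hP2, Matrix.fromBlocks_apply₁₂]
          simp [permMat, hπs, Fin.succ_ne_zero]
        · obtain ⟨b, hb⟩ := Fin.exists_succAbove_eq hj
          rw [Fin.succAbove_zero] at hb
          subst hb
          rw [hecs, hP2, Matrix.fromBlocks_apply₁₁]
          simp [permMat, hπs, Fin.succ_inj]
    -- triangularity of the lifted factors
    have hP1tri : IsUpperTri (P1.submatrix er er) := by
      intro i j hij
      rw [Matrix.submatrix_apply]
      rcases eq_or_ne i i₀ with rfl | hi
      · rcases eq_or_ne j i₀ with rfl | hj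
        · exact absurd hij (lt_irrefl _)
        · obtain ⟨b, hb⟩ := Fin.exists_succAbove_eq hj
          subst hb
          rw [her₀, hers, hP1, Matrix.fromBlocks_apply₂₁]; rfl
      · obtain ⟨a, ha⟩ := Fin.exists_succAbove_eq hi
        subst ha
        rcases eq_or_ne j i₀ with rfl | hj
        · rw [hers, her₀, hP1, Matrix.fromBlocks_apply₁₂]; rfl
        · obtain ⟨b, hb⟩ := Fin.exists_succAbove_eq hj
          subst hb
          rw [hers, hers, hP1, Matrix.fromBlocks_apply₁₁]
          exact hV₁ a b (Fin.succAbove_lt_succAbove_iff.mp hij)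
    have hP3tri : IsUpperTri (P3.submatrix ec ec) := by
      intro i j hij
      rw [Matrix.submatrix_apply]
      rcases eq_or_ne i 0 with rfl | hi
      · exact absurd hij (Fin.not_lt_zero j)
      · obtain ⟨a, ha⟩ := Fin.exists_succAbove_eq hi
        rw [Fin.succAbove_zero] at ha
        subst ha
        rcases eq_or_ne j 0 with rfl | hj
        · rw [hecs, hec₀, hP3, Matrix.fromBlocks_apply₁₂]; rfl
        · obtain ⟨b, hb⟩ := Fin.exists_succAbove_eq hj
          rw [Fin.succAbove_zero] at hb
          subst hb
          rw [hecs, hecs, hP3, Matrix.fromBlocks_apply₁₁]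
          exact hV₂ a b (by exact_mod_cast Fin.succ_lt_succ_iff.mp hij)
    have hP1det : IsUnit (P1.submatrix er er).det := by
      rw [Matrix.det_submatrix_equiv_self, hP1, Matrix.det_fromBlocks_zero₂₁]
      simpa using hVd₁
    have hP3det : IsUnit (P3.submatrix ec ec).det := by
      rw [Matrix.det_submatrix_equiv_self, hP3, Matrix.det_fromBlocks_zero₂₁]
      simpa using hVd₂
    -- assemble
    have hWinv : W = E₁⁻¹ * B * E₂⁻¹ := by
      rw [hBW, Matrix.mul_assoc E₁ W E₂, ← Matrix.mul_assoc E₁⁻¹ E₁ (W * E₂),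
        Matrix.nonsing_inv_mul _ hE₁det, Matrix.one_mul, Matrix.mul_assoc W E₂ E₂⁻¹,
        Matrix.mul_nonsing_inv _ hE₂det, Matrix.mul_one]
    refine ⟨π, E₁⁻¹ * (P1.submatrix er er) * D, (P3.submatrix ec ec) * E₂⁻¹,
      ?_, ?_, ?_, ?_, ?_⟩
    · exact ((hE₁tri.inv hE₁det).mul hP1tri).mul hDtri
    · exact hP3tri.mul (hE₂tri.inv hE₂det)
    · rw [Matrix.det_mul, Matrix.det_mul]
      exact (((Matrix.isUnit_nonsing_inv_det _ hE₁det).mul hP1det).mul hDdet)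
    · rw [Matrix.det_mul]
      exact hP3det.mul (Matrix.isUnit_nonsing_inv_det _ hE₂det)
    · rw [hWinv, hB2, hMM]
      simp only [Matrix.mul_assoc]

section Part3
variable {α : Type*} [PartialOrder α] [Fintype α]

lemma cartan_det_isUnit {n : ℕ} (σ : α ≃ Fin n) (hσ : IsLinExt σ) :
    IsUnit (cartan σ).det := by
  have htri : (cartan σ).BlockTriangular (OrderDual.toDual : Fin n → (Fin n)ᵒᵈ) := by
    intro i j hij
    have hij' : i < j := hij
    have : ¬ σ.symm j ≤ σ.symm i := by
      intro hle
      have := hσ _ _ hle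
      simp only [Equiv.apply_symm_apply] at this
      exact absurd hij' (not_lt.mpr this)
    simp [cartan, this]
  rw [Matrix.det_of_lowerTriangular _ htri]
  have : ∀ i, cartan σ i i = 1 := by intro i; simp [cartan]
  simp [this]

lemma exists_minimal_le (x : α) : ∃ m, m ≤ x ∧ ∀ y, y ≤ m → y = m := by
  classical
  obtain ⟨m, hm, hmin⟩ := Finset.exists_minimal (s := Finset.univ.filter (· ≤ x))
    ⟨x, by simp⟩
  simp only [Finset.mem_filter, Finset.mem_univ, true_and] at hm
  refine ⟨m, hm, fun y hy => ?_⟩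
  exact le_antisymm hy (hmin (by simp [le_trans hy hm]) hy)

lemma exists_maximal_ge (x : α) : ∃ M, x ≤ M ∧ ∀ y, M ≤ y → y = M := by
  classical
  obtain ⟨M, hM, hmax⟩ := Finset.exists_maximal (s := Finset.univ.filter (x ≤ ·))
    ⟨x, by simp⟩
  simp only [Finset.mem_filter, Finset.mem_univ, true_and] at hM
  refine ⟨M, hM, fun y hy => ?_⟩
  exact le_antisymm (hmax (by simp [le_trans hM hy]) hy) hy

lemma exists_linext_full (m M : α)
    (hm : ∀ y : α, y ≤ m → y = m) (hM : ∀ y : α, M ≤ y → y = M) (hne : m ≠ M) :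
    ∃ σ : α ≃ Fin (Fintype.card α),
      IsLinExt σ ∧ (∀ x, σ m ≤ σ x) ∧ (∀ x, σ x ≤ σ M) := by
  classical
  let L := Bool ×ₗ (Bool ×ₗ LinearExtension α)
  let g : α → L := fun x => toLex (decide (x ≠ m), toLex (decide (x = M), toLinearExtension x))
  have ginj : Function.Injective g := by
    intro x y hxy
    have : toLinearExtension x = toLinearExtension y :=
      congrArg (fun z : L => (ofLex (ofLex z).2).2) hxy
    exact this
  have hgm : ∀ x, g m ≤ g x := by
    intro x
    rcases eq_or_ne x m with rfl | hx
    · exact le_refl _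
    · apply le_of_lt
      rw [Prod.Lex.lt_iff]
      left
      simp [g, hx, Bool.lt_iff]
  have hgM : ∀ x, g x ≤ g M := by
    intro x
    rcases eq_or_ne x M with rfl | hx
    · exact le_refl _
    · apply le_of_lt
      rw [Prod.Lex.lt_iff]
      rcases eq_or_ne x m with rfl | hxm
      · left; simp [g, hne.symm, Bool.lt_iff]
      · right
        constructor
        · simp [g, hxm, hne.symm]
        · rw [Prod.Lex.lt_iff]; left; simp [g, hx, Bool.lt_iff]
  have hgmono : ∀ x y : α, x ≤ y → g x ≤ g y := by
    intro x y hxy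
    rcases eq_or_ne x y with rfl | hxyne
    · exact le_refl _
    rcases eq_or_ne x m with rfl | hxm
    · exact hgm y
    rcases eq_or_ne y M with rfl | hyM
    · exact hgM x
    have hym : y ≠ m := by
      intro h; subst h; exact hxyne (hm x hxy)
    have hxM : x ≠ M := by
      intro h; subst h; exact hyM (hM y hxy)
    rw [Prod.Lex.le_iff]
    right
    refine ⟨by simp [g, hxm, hym], ?_⟩
    rw [Prod.Lex.le_iff]
    right
    refine ⟨by simp [g, hxM, hyM], ?_⟩
    exact toLinearExtension.monotone hxy
  -- assemble the equivalence
  let s : Finset L := Finset.univ.image g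
  have hcard : s.card = Fintype.card α := by
    rw [Finset.card_image_of_injective _ ginj, Finset.card_univ]
  let e := s.orderIsoOfFin hcard
  have hq : Function.Bijective (fun x : α => (⟨g x, Finset.mem_image_of_mem g (Finset.mem_univ x)⟩ : {z // z ∈ s})) := by
    constructor
    · intro x y hxy
      exact ginj (congrArg Subtype.val hxy)
    · rintro ⟨z, hz⟩
      obtain ⟨x, _, rfl⟩ := Finset.mem_image.mp hz
      exact ⟨x, rfl⟩
  let q : α ≃ {z // z ∈ s} := Equiv.ofBijective _ hq
  refine ⟨q.trans e.symm.toEquiv, ?_, ?_, ?_⟩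
  · intro a b hab
    have : (q a : L) ≤ (q b : L) := hgmono a b hab
    exact e.symm.monotone this
  · intro x
    exact e.symm.monotone (hgm x)
  · intro x
    exact e.symm.monotone (hgM x)

end Part3

section Part4
variable {α : Type*} [PartialOrder α] [Fintype α] [Nonempty α]

lemma ech_min_max (σ : α ≃ Fin (Fintype.card α)) (hσ : IsLinExt σ)
    {π : Equiv.Perm (Fin (Fintype.card α))} (hπ : IsBruhatPerm (cartan σ) π)
    (m M : α) (hm0 : ∀ x, σ m ≤ σ x) (hMl : ∀ x, σ x ≤ σ M) (hmM : m ≤ M) :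
    ech σ π m = M := by
  haveI : NeZero (Fintype.card α) := ⟨Fintype.card_ne_zero⟩
  have hσm : σ m = 0 := by
    refine le_antisymm ?_ (Fin.zero_le _)
    have := hm0 (σ.symm 0)
    simpa using this
  have hsymm0 : σ.symm 0 = m := by rw [← hσm, Equiv.symm_apply_apply]
  obtain ⟨h1, h2⟩ := key1 σ hπ
  rw [hsymm0] at h1 h2
  have hMle : σ M ≤ π⁻¹ 0 := h2 M hmM
  have hinv : π⁻¹ 0 = σ M := by
    refine le_antisymm ?_ hMle
    have := hMl (σ.symm (π⁻¹ 0))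
    simpa using this
  simp [ech, hσm, hinv]

end Part4

end Stmt12Aux
end

open Stmt12Aux in
/-- Every echelon-independent connected finite poset is bounded: it has a
minimum element and a maximum element. -/
theorem stmt12 {α : Type*} [PartialOrder α] [Fintype α] [Nonempty α]
    (hconn : PosetConnected α) (hind : EchIndep α) :
    (∃ m : α, ∀ a : α, m ≤ a) ∧ (∃ M : α, ∀ a : α, a ≤ M) := by
  classical
  by_cases hsp : ∃ x : α, (∀ y, y ≤ x → y = x) ∧ (∀ y, x ≤ y → y = x)
  · obtain ⟨x, hxmin, hxmax⟩ := hsp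
    have hall : ∀ a : α, a = x := by
      intro a
      have h := hconn x a
      induction h with
      | refl => rfl
      | @tail u v hp hstep ih =>
          subst ih
          rcases hstep with h | h
          · exact hxmax v h.le
          · exact hxmin v h.le
    exact ⟨⟨x, fun a => le_of_eq (hall a).symm⟩, ⟨x, fun a => le_of_eq (hall a)⟩⟩
  · obtain ⟨a₀⟩ := (inferInstance : Nonempty α)
    obtain ⟨m₀, hm₀le, hm₀min⟩ := exists_minimal_le a₀
    obtain ⟨M₀, hM₀ge, hM₀max⟩ := exists_maximal_ge a₀
    have hne₀ : m₀ ≠ M₀ := by rintro rfl; exact hsp ⟨m₀, hm₀min, hM₀max⟩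
    obtain ⟨σ₀, hσ₀, h0a, h0b⟩ := exists_linext_full m₀ M₀ hm₀min hM₀max hne₀
    obtain ⟨π₀, hπ₀⟩ := bruhat_exists _ (cartan_det_isUnit σ₀ hσ₀)
    have hfinj : Function.Injective (ech σ₀ π₀) := by
      intro x y h
      simp only [ech] at h
      exact σ₀.injective (π₀⁻¹.injective (σ₀.symm.injective h))
    have M1 : ∀ m M : α, (∀ y, y ≤ m → y = m) → (∀ y, M ≤ y → y = M) → m ≤ M →
        ech σ₀ π₀ m = M := by
      intro m M hmmin hMmax hmM
      have hne : m ≠ M := by rintro rfl; exact hsp ⟨m, hmmin, hMmax⟩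
      obtain ⟨σ, hσ, ha, hb⟩ := exists_linext_full m M hmmin hMmax hne
      obtain ⟨π, hπ⟩ := bruhat_exists _ (cartan_det_isUnit σ hσ)
      rw [hind σ₀ σ π₀ π hσ₀ hσ hπ₀ hπ]
      exact ech_min_max σ hσ hπ m M ha hb hmM
    have uniqM : ∀ x M M' : α, (∀ y, M ≤ y → y = M) → (∀ y, M' ≤ y → y = M') →
        x ≤ M → x ≤ M' → M = M' := by
      intro x M M' hM hM' h1 h2
      obtain ⟨m, hmx, hmmin⟩ := exists_minimal_le x
      rw [← M1 m M hmmin hM (hmx.trans h1), ← M1 m M' hmmin hM' (hmx.trans h2)]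
    have uniqm : ∀ x m m' : α, (∀ y, y ≤ m → y = m) → (∀ y, y ≤ m' → y = m') →
        m ≤ x → m' ≤ x → m = m' := by
      intro x m m' hm hm' h1 h2
      obtain ⟨M, hxM, hMmax⟩ := exists_maximal_ge x
      exact hfinj ((M1 m M hm hMmax (h1.trans hxM)).trans
        (M1 m' M hm' hMmax (h2.trans hxM)).symm)
    have pathM : ∀ a b : α, Relation.ReflTransGen (fun x y : α => x ⋖ y ∨ y ⋖ x) a b →
        ∀ M M' : α, (∀ y, M ≤ y → y = M) → (∀ y, M' ≤ y → y = M') →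
          a ≤ M → b ≤ M' → M = M' := by
      intro a b hp
      induction hp with
      | refl => exact fun M M' hM hM' h1 h2 => uniqM a M M' hM hM' h1 h2
      | @tail u v hp hstep ih =>
          intro M M' hM hM' h1 h2
          obtain ⟨Mu, huMu, hMumax⟩ := exists_maximal_ge u
          refine (ih M Mu hM hMumax h1 huMu).trans ?_
          rcases hstep with h | h
          · exact uniqM u Mu M' hMumax hM' huMu (h.le.trans h2)
          · exact uniqM v Mu M' hMumax hM' (h.le.trans huMu) h2
    have pathm : ∀ a b : α, Relation.ReflTransGen (fun x y : α => x ⋖ y ∨ y ⋖ x) a b →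
        ∀ m m' : α, (∀ y, y ≤ m → y = m) → (∀ y, y ≤ m' → y = m') →
          m ≤ a → m' ≤ b → m = m' := by
      intro a b hp
      induction hp with
      | refl => exact fun m m' hm hm' h1 h2 => uniqm a m m' hm hm' h1 h2
      | @tail u v hp hstep ih =>
          intro m m' hm hm' h1 h2
          obtain ⟨mu, hmuu, hmumin⟩ := exists_minimal_le u
          refine (ih m mu hm hmumin h1 hmuu).trans ?_
          rcases hstep with h | h
          · exact uniqm v mu m' hmumin hm' (hmuu.trans h.le) h2
          · exact uniqm u mu m' hmumin hm' hmuu (h2.trans h.le)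
    constructor
    · refine ⟨m₀, fun a => ?_⟩
      obtain ⟨ma, hmaa, hmamin⟩ := exists_minimal_le a
      have := pathm a₀ a (hconn a₀ a) m₀ ma hm₀min hmamin hm₀le hmaa
      exact this ▸ hmaa
    · refine ⟨M₀, fun a => ?_⟩
      obtain ⟨Ma, haMa, hMamax⟩ := exists_maximal_ge a
      have := pathM a₀ a (hconn a₀ a) M₀ Ma hM₀max hMamax hM₀ge haMa
      exact this ▸ haMa
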